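/- arXiv:2601.20280 — 3 statements merged into one kernel-verified Lean document; each statement's English description precedes it below -/
import Mathlib

section
/- Let μ be a probability measure on a measurable space Ω, and let E, H be finite-dimensional real inner product spaces. Let F : E → H be continuously differentiable with operator norm of its derivative uniformly bounded: ‖fderiv F z‖ ≤ L for all z ∈ E, for some L ≥ 0. Let X : Ω → E and Y : Ω → H be measurable with ∫‖Y − F(X)‖² dμ < ∞, and let u : Ω → E be measurable with ‖u(ω)‖ ≤ C for all ω, for some C ≥ 0. If A := ∫ ⟨ Y(ω) − F(X(ω)), (fderiv F (X(ω)))(u(ω)) ⟩ dμ(ω) > 0, then there exists ε > 0 such that for every δ ∈ (0, ε], ∫‖Y − F(X + δ·u)‖² dμ < ∫‖Y − F(X)‖² dμ. -/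
open MeasureTheory Filter Topology Set

/-- small-step improvement guarantee for input-side adapters.
If the Jacobian-aligned signal `A = ∫⟨Y − F(X), J_F(X) u⟩ dμ` is positive, then
every sufficiently small positive input nudge strictly reduces the risk. -/
theorem input_adapter_small_step_improvement
    {Ω : Type*} [MeasurableSpace Ω] (μ : Measure Ω) [IsProbabilityMeasure μ]
    {E : Type*} [NormedAddCommGroup E] [InnerProductSpace ℝ E] [FiniteDimensional ℝ E]
    [MeasurableSpace E] [BorelSpace E]
    {H : Type*} [NormedAddCommGroup H] [InnerProductSpace ℝ H] [FiniteDimensional ℝ H]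
    [MeasurableSpace H] [BorelSpace H]
    (F : E → H) (hF : ContDiff ℝ 1 F)
    (L : ℝ) (hL : 0 ≤ L) (hFL : ∀ z : E, ‖fderiv ℝ F z‖ ≤ L)
    (X : Ω → E) (Y : Ω → H) (hX : Measurable X) (hY : Measurable Y)
    (hint : Integrable (fun ω => ‖Y ω - F (X ω)‖ ^ 2) μ)
    (u : Ω → E) (hu : Measurable u)
    (C : ℝ) (hC : 0 ≤ C) (huC : ∀ ω, ‖u ω‖ ≤ C)
    (hA : 0 < ∫ ω, (inner ℝ (Y ω - F (X ω)) ((fderiv ℝ F (X ω)) (u ω)) : ℝ) ∂μ) :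
    ∃ ε > 0, ∀ δ : ℝ, 0 < δ → δ ≤ ε →
      ∫ ω, ‖Y ω - F (X ω + δ • u ω)‖ ^ 2 ∂μ
        < ∫ ω, ‖Y ω - F (X ω)‖ ^ 2 ∂μ := by
  have hFc : Continuous F := hF.continuous
  have hFd : Differentiable ℝ F := hF.differentiable one_ne_zero
  have hlip : ∀ a b : E, ‖F a - F b‖ ≤ L * ‖a - b‖ := fun a b =>
    convex_univ.norm_image_sub_le_of_norm_fderiv_le (fun x _ => hFd x) (fun x _ => hFL x)
      (Set.mem_univ b) (Set.mem_univ a)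
  -- measurability
  have hmeas : ∀ δ : ℝ, Measurable fun ω => ‖Y ω - F (X ω + δ • u ω)‖ ^ 2 := fun δ =>
    ((hY.sub (hFc.measurable.comp (hX.add (hu.const_smul δ)))).norm).pow_const 2
  have hmeas0 : Measurable fun ω => ‖Y ω - F (X ω)‖ ^ 2 :=
    ((hY.sub (hFc.measurable.comp hX)).norm).pow_const 2
  have hrnorm : Integrable (fun ω => ‖Y ω - F (X ω)‖) μ := by
    refine Integrable.mono' ((integrable_const (1:ℝ)).add hint)
      ((hY.sub (hFc.measurable.comp hX)).norm).aestronglyMeasurable ?_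
    filter_upwards with ω
    rw [Real.norm_eq_abs, abs_of_nonneg (norm_nonneg _)]
    simp only [Pi.add_apply]
    nlinarith [sq_nonneg (‖Y ω - F (X ω)‖ - 1), norm_nonneg (Y ω - F (X ω))]
  -- bound on the increment
  have hΔ : ∀ (δ : ℝ) (ω : Ω), ‖F (X ω + δ • u ω) - F (X ω)‖ ≤ L * (|δ| * C) := by
    intro δ ω
    have h1 := hlip (X ω + δ • u ω) (X ω)
    have h2 : ‖X ω + δ • u ω - X ω‖ = |δ| * ‖u ω‖ := by
      simp [norm_smul, Real.norm_eq_abs]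
    have h3 : |δ| * ‖u ω‖ ≤ |δ| * C :=
      mul_le_mul_of_nonneg_left (huC ω) (abs_nonneg δ)
    calc ‖F (X ω + δ • u ω) - F (X ω)‖ ≤ L * (|δ| * ‖u ω‖) := by rw [← h2]; exact h1
      _ ≤ L * (|δ| * C) := mul_le_mul_of_nonneg_left h3 hL
  -- algebraic key identity
  have key : ∀ (δ : ℝ) (ω : Ω),
      ‖Y ω - F (X ω + δ • u ω)‖ ^ 2 - ‖Y ω - F (X ω)‖ ^ 2
        = ‖F (X ω + δ • u ω) - F (X ω)‖ ^ 2
          - 2 * (inner ℝ (Y ω - F (X ω)) (F (X ω + δ • u ω) - F (X ω)) : ℝ) := by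
    intro δ ω
    have hEq : Y ω - F (X ω + δ • u ω)
        = (Y ω - F (X ω)) - (F (X ω + δ • u ω) - F (X ω)) := by abel
    rw [hEq, norm_sub_sq_real]
    ring
  -- dominated convergence for the difference quotients
  have hDC : Tendsto
      (fun δ : ℝ => ∫ ω, (‖Y ω - F (X ω + δ • u ω)‖ ^ 2 - ‖Y ω - F (X ω)‖ ^ 2) / δ ∂μ)
      (𝓝[>] (0:ℝ))
      (𝓝 (∫ ω, (-2) * (inner ℝ (Y ω - F (X ω)) ((fderiv ℝ F (X ω)) (u ω)) : ℝ) ∂μ)) := by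
    apply tendsto_integral_filter_of_dominated_convergence
      (fun ω => 2 * L * C * ‖Y ω - F (X ω)‖ + L ^ 2 * C ^ 2)
    · filter_upwards with δ
      exact (((hmeas δ).sub hmeas0).div_const δ).aestronglyMeasurable
    · filter_upwards [Ioo_mem_nhdsGT (one_pos : (0:ℝ) < 1)] with δ hδ
      filter_upwards with ω
      obtain ⟨hδ0, hδ1⟩ := hδ
      set Δ := F (X ω + δ • u ω) - F (X ω) with hΔdef
      have hdb : ‖Δ‖ ≤ L * (δ * C) := by
        have := hΔ δ ω; rwa [abs_of_pos hδ0] at this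
      have hip : |(inner ℝ (Y ω - F (X ω)) Δ : ℝ)| ≤ ‖Y ω - F (X ω)‖ * ‖Δ‖ :=
        abs_real_inner_le_norm _ _
      rw [Real.norm_eq_abs, abs_div, abs_of_pos hδ0, div_le_iff₀ hδ0, key δ ω]
      have h1 : |‖Δ‖ ^ 2 - 2 * (inner ℝ (Y ω - F (X ω)) Δ : ℝ)|
          ≤ ‖Δ‖ ^ 2 + 2 * (‖Y ω - F (X ω)‖ * ‖Δ‖) := by
        have := abs_le.mp hip
        rw [abs_le]; constructor <;> nlinarith [sq_nonneg ‖Δ‖]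
      have h2 : ‖Δ‖ ^ 2 ≤ (L * (δ * C)) ^ 2 := by nlinarith [norm_nonneg Δ]
      have h3 : ‖Y ω - F (X ω)‖ * ‖Δ‖ ≤ ‖Y ω - F (X ω)‖ * (L * (δ * C)) :=
        mul_le_mul_of_nonneg_left hdb (norm_nonneg _)
      nlinarith [norm_nonneg (Y ω - F (X ω)), norm_nonneg Δ, mul_nonneg hL hC,
        mul_nonneg (mul_nonneg hL hL) (mul_nonneg hC hC)]
    · exact ((hrnorm.const_mul (2 * L * C)).add (integrable_const _))
    · filter_upwards with ω
      -- derivative along the line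
      have hline : HasDerivAt (fun δ : ℝ => X ω + δ • u ω) (u ω) 0 := by
        simpa using ((hasDerivAt_id (0:ℝ)).smul_const (u ω)).const_add (X ω)
      have hFat : HasFDerivAt F (fderiv ℝ F (X ω)) (X ω + (0:ℝ) • u ω) := by
        simpa using (hFd (X ω)).hasFDerivAt
      have hcomp : HasDerivAt (fun δ : ℝ => F (X ω + δ • u ω))
          ((fderiv ℝ F (X ω)) (u ω)) 0 := by
        exact hFat.comp_hasDerivAt 0 hline
      have hslope :
          Tendsto (fun δ : ℝ => δ⁻¹ • (F (X ω + δ • u ω) - F (X ω)))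
            (𝓝[>] (0:ℝ)) (𝓝 ((fderiv ℝ F (X ω)) (u ω))) := by
        have h := (hasDerivAt_iff_tendsto_slope.mp hcomp).mono_left
          (nhdsWithin_mono 0 (fun x (hx : x ∈ Ioi (0:ℝ)) => ne_of_gt hx))
        refine h.congr fun δ => ?_
        simp [slope_def_module]
      have hδ0 : Tendsto (fun δ : ℝ => δ) (𝓝[>] (0:ℝ)) (𝓝 0) :=
        tendsto_id.mono_left nhdsWithin_le_nhds
      have h2 : Tendsto (fun δ : ℝ =>
          (-2) * (inner ℝ (Y ω - F (X ω)) (δ⁻¹ • (F (X ω + δ • u ω) - F (X ω))) : ℝ)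
            + δ * ‖δ⁻¹ • (F (X ω + δ • u ω) - F (X ω))‖ ^ 2)
          (𝓝[>] (0:ℝ))
          (𝓝 ((-2) * (inner ℝ (Y ω - F (X ω)) ((fderiv ℝ F (X ω)) (u ω)) : ℝ))) := by
        have := ((tendsto_const_nhds : Tendsto (fun _ : ℝ => (-2:ℝ)) (𝓝[>] (0:ℝ)) (𝓝 (-2:ℝ))).mul
            ((tendsto_const_nhds : Tendsto (fun _ : ℝ => Y ω - F (X ω)) _ _).inner hslope)).add
          (hδ0.mul ((hslope.norm).pow 2))
        simpa using this
      refine Tendsto.congr' ?_ h2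
      filter_upwards [self_mem_nhdsWithin] with δ (hδ : δ ∈ Ioi (0:ℝ))
      rw [key δ ω]
      have hδ' : δ ≠ 0 := ne_of_gt hδ
      rw [real_inner_smul_right, norm_smul, Real.norm_eq_abs,
        abs_of_pos (inv_pos.mpr hδ)]
      field_simp
      ring
  -- the limit is negative
  have hneg : ∫ ω, (-2) * (inner ℝ (Y ω - F (X ω)) ((fderiv ℝ F (X ω)) (u ω)) : ℝ) ∂μ < 0 := by
    rw [integral_const_mul]
    nlinarith
  have hev : ∀ᶠ δ in 𝓝[>] (0:ℝ),
      (∫ ω, (‖Y ω - F (X ω + δ • u ω)‖ ^ 2 - ‖Y ω - F (X ω)‖ ^ 2) / δ ∂μ) < 0 :=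
    hDC.eventually_lt_const hneg
  -- integrability of the perturbed risk
  have hi2 : ∀ δ : ℝ, 0 < δ → δ ≤ 1 →
      Integrable (fun ω => ‖Y ω - F (X ω + δ • u ω)‖ ^ 2) μ := by
    intro δ hδ hδ1
    refine Integrable.mono' ((hint.const_mul 2).add (integrable_const (2 * (L * C) ^ 2)))
      ((hmeas δ).aestronglyMeasurable) ?_
    filter_upwards with ω
    have hb : ‖Y ω - F (X ω + δ • u ω)‖ ≤ ‖Y ω - F (X ω)‖ + L * C := by
      have hEq : Y ω - F (X ω + δ • u ω)
          = (Y ω - F (X ω)) - (F (X ω + δ • u ω) - F (X ω)) := by abel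
      rw [hEq]
      refine (norm_sub_le _ _).trans ?_
      have h := hΔ δ ω
      rw [abs_of_pos hδ] at h
      have h2 : L * (δ * C) ≤ L * C := by
        nlinarith [mul_nonneg (mul_nonneg hL hC) (by linarith : (0:ℝ) ≤ 1 - δ)]
      linarith
    rw [Real.norm_eq_abs, abs_of_nonneg (by positivity)]
    simp only [Pi.add_apply]
    nlinarith [norm_nonneg (Y ω - F (X ω)), norm_nonneg (Y ω - F (X ω + δ • u ω)),
      mul_nonneg hL hC, sq_nonneg (‖Y ω - F (X ω)‖ - L * C)]
  -- extract a window
  have hmem : {δ : ℝ |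
      (∫ ω, (‖Y ω - F (X ω + δ • u ω)‖ ^ 2 - ‖Y ω - F (X ω)‖ ^ 2) / δ ∂μ) < 0}
      ∩ Ioo 0 1 ∈ 𝓝[>] (0:ℝ) :=
    Filter.inter_mem hev (Ioo_mem_nhdsGT one_pos)
  obtain ⟨w, hw, hsub⟩ := mem_nhdsGT_iff_exists_Ioo_subset.mp hmem
  refine ⟨w / 2, by simpa using (mem_Ioi.mp hw), fun δ hδ hδw => ?_⟩
  have hδmem : δ ∈ Ioo (0:ℝ) w := ⟨hδ, by linarith [mem_Ioi.mp hw]⟩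
  obtain ⟨hI, _, hδ1⟩ := hsub hδmem
  simp only [Set.mem_setOf_eq] at hI
  have hsplit : ∫ ω, (‖Y ω - F (X ω + δ • u ω)‖ ^ 2 - ‖Y ω - F (X ω)‖ ^ 2) / δ ∂μ
      = ((∫ ω, ‖Y ω - F (X ω + δ • u ω)‖ ^ 2 ∂μ) - ∫ ω, ‖Y ω - F (X ω)‖ ^ 2 ∂μ) / δ := by
    rw [integral_div, integral_sub (hi2 δ hδ hδ1.le) hint]
  rw [hsplit] at hI
  rcases div_neg_iff.mp hI with ⟨_, hb⟩ | ⟨ha, _⟩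
  · linarith
  · linarith
end

section
/- Let x, a ∈ EuclideanSpace ℝ (Fin n), let B_X ≥ 0 with |x(i)| ≤ B_X for all i, let |a(i)| ≤ 1 for all i, and let δ ≥ 0. Define x̃ ∈ EuclideanSpace ℝ (Fin n) by x̃(i) := x(i) · exp(δ · a(i)). Then ‖x̃ − x‖ ≤ δ · exp(δ) · B_X · ‖a‖, where ‖·‖ denotes the Euclidean norm. -/
lemma abs_exp_sub_one_le_mul (t : ℝ) : |Real.exp t - 1| ≤ |t| * Real.exp |t| := by
  rcases le_or_gt 0 t with h | h
  · rw [abs_of_nonneg h, abs_of_nonneg (by nlinarith [Real.add_one_le_exp t] : (0:ℝ) ≤ Real.exp t - 1)]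
    have h1 : (-t) + 1 ≤ Real.exp (-t) := Real.add_one_le_exp (-t)
    have h2 : Real.exp (-t) * Real.exp t = 1 := by rw [← Real.exp_add]; simp
    nlinarith [Real.exp_pos t]
  · rw [abs_of_neg h, abs_of_nonpos (by nlinarith [Real.exp_lt_one_iff.mpr h] : Real.exp t - 1 ≤ 0)]
    have h1 : t + 1 ≤ Real.exp t := Real.add_one_le_exp t
    have h2 : 1 ≤ Real.exp (-t) := Real.one_le_exp (by linarith)
    nlinarith

/-- coordinatewise mean-value estimate for the multiplicative
(exponential-form) input edit `x̃ i = x i · exp(δ · a i)`: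
`‖x̃ − x‖ ≤ δ · exp(δ) · B_X · ‖a‖`. -/
theorem multiplicative_edit_estimate
    {n : ℕ} (x a xt : EuclideanSpace ℝ (Fin n))
    (B : ℝ) (hB : 0 ≤ B) (hx : ∀ i, |x i| ≤ B) (ha : ∀ i, |a i| ≤ 1)
    (δ : ℝ) (hδ : 0 ≤ δ)
    (hxt : ∀ i, xt i = x i * Real.exp (δ * a i)) :
    ‖xt - x‖ ≤ δ * Real.exp δ * B * ‖a‖ := by
  set c : ℝ := δ * Real.exp δ * B with hc
  have hc0 : 0 ≤ c := by positivity
  have key : ∀ i, |xt i - x i| ≤ c * |a i| := by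
    intro i
    have h1 : |xt i - x i| = |x i| * |Real.exp (δ * a i) - 1| := by
      rw [hxt i, ← abs_mul]; ring_nf
    have h2 : |Real.exp (δ * a i) - 1| ≤ |δ * a i| * Real.exp |δ * a i| :=
      abs_exp_sub_one_le_mul _
    have h5 : |δ * a i| = δ * |a i| := by rw [abs_mul, abs_of_nonneg hδ]
    have h3 : |δ * a i| ≤ δ := by
      rw [h5]; nlinarith [ha i, abs_nonneg (a i)]
    have h4 : Real.exp |δ * a i| ≤ Real.exp δ := Real.exp_le_exp.mpr h3
    have h6 : |Real.exp (δ * a i) - 1| ≤ δ * |a i| * Real.exp δ := by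
      calc |Real.exp (δ * a i) - 1| ≤ |δ * a i| * Real.exp |δ * a i| := h2
        _ ≤ |δ * a i| * Real.exp δ :=
            mul_le_mul_of_nonneg_left h4 (abs_nonneg _)
        _ = δ * |a i| * Real.exp δ := by rw [h5]
    rw [h1]
    calc |x i| * |Real.exp (δ * a i) - 1| ≤ B * (δ * |a i| * Real.exp δ) :=
          mul_le_mul (hx i) h6 (abs_nonneg _) hB
      _ = c * |a i| := by ring
  calc ‖xt - x‖ = Real.sqrt (∑ i, |(xt - x) i| ^ 2) := by
        simp [EuclideanSpace.norm_eq, Real.norm_eq_abs]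
    _ ≤ Real.sqrt (∑ i, |c * a i| ^ 2) := by
        apply Real.sqrt_le_sqrt
        apply Finset.sum_le_sum
        intro i _
        have hi : |(xt - x) i| = |xt i - x i| := by simp [PiLp.sub_apply]
        rw [hi, abs_mul, abs_of_nonneg hc0]
        exact pow_le_pow_left₀ (abs_nonneg _) (key i) 2
    _ = ‖c • a‖ := by
        simp only [EuclideanSpace.norm_eq, Real.norm_eq_abs, PiLp.smul_apply, smul_eq_mul,
          abs_mul, mul_pow, sq_abs]
    _ = c * ‖a‖ := by rw [norm_smul]; simp [abs_of_nonneg hc0]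
end

section
/- Let n ≥ 1, α ∈ (0, 1), and let (Ω, μ) be a probability space. Let R : Ω → (Fin (n+1) → ℝ) be measurable and exchangeable: for every permutation σ of Fin (n+1), the pushforward law of ω ↦ (R(ω) ∘ σ) under μ equals the pushforward law of R. Let k := ⌈(1−α)·(n+1)⌉ and suppose k ≤ n. Define Q(ω) to be the k-th order statistic (k-th smallest value) of the first n coordinates R(ω)(0), …, R(ω)(n−1). Then μ{ ω : R(ω)(n) ≤ Q(ω) } ≥ 1 − α. -/
open MeasureTheory

/-- The `j`-th order statistic (0-indexed `j`-th smallest value) of a finite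
tuple `f : Fin n → ℝ`, obtained via the sorting permutation `Tuple.sort`. -/
noncomputable def orderStat {n : ℕ} (f : Fin n → ℝ) (j : Fin n) : ℝ :=
  f (Tuple.sort f j)

/-- count of entries strictly below `x i` -/
noncomputable def cnt {m : ℕ} (x : Fin m → ℝ) (i : Fin m) : ℕ :=
  (Finset.univ.filter (fun j => x j < x i)).card

lemma card_filter_comp {m : ℕ} (f : Fin m → ℝ) (σ : Equiv.Perm (Fin m)) (c : ℝ) :
    (Finset.univ.filter (fun i => f (σ i) < c)).card
      = (Finset.univ.filter (fun i => f i < c)).card := by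
  rw [Finset.card_filter, Finset.card_filter]
  exact Equiv.sum_comp σ (fun i => if f i < c then 1 else 0)

lemma cnt_comp {m : ℕ} (x : Fin m → ℝ) (σ : Equiv.Perm (Fin m)) (j : Fin m) :
    cnt (x ∘ σ) j = cnt x (σ j) := by
  unfold cnt
  simpa using card_filter_comp x σ (x (σ j))

lemma aux_card (M t : ℕ) (h : t ≤ M) :
    ((Finset.univ : Finset (Fin M)).filter (fun i : Fin M => i.val < t)).card = t := by
  rw [← Finset.card_range t]
  refine Finset.card_bij (fun i _ => (i : ℕ)) ?_ ?_ ?_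
  · intro a ha; simp only [Finset.mem_filter] at ha; simpa using ha.2
  · intro a _ b _ hab; exact Fin.val_injective hab
  · intro b hb
    simp only [Finset.mem_range] at hb
    exact ⟨⟨b, lt_of_lt_of_le hb h⟩, by simpa using hb, rfl⟩

lemma le_orderStat_iff {m : ℕ} (g : Fin m → ℝ) (hg : Monotone g) (x : ℝ) (j : Fin m) :
    x ≤ g j ↔ (Finset.univ.filter (fun i => g i < x)).card ≤ (j : ℕ) := by
  constructor
  · intro h
    calc (Finset.univ.filter (fun i => g i < x)).card
        ≤ (Finset.range (j : ℕ)).card := by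
          refine Finset.card_le_card_of_injOn (fun i => (i : ℕ)) ?_ ?_
          · intro a ha
            simp only [Finset.mem_coe, Finset.mem_filter] at ha
            simp only [Finset.mem_coe, Finset.mem_range]
            by_contra hc
            have : g j ≤ g a := hg (by rw [Fin.le_def]; omega)
            linarith [ha.2]
          · exact fun a _ b _ hab => Fin.val_injective hab
      _ = j := Finset.card_range _
  · intro h
    by_contra hc
    push_neg at hc
    have hle : (j : ℕ) + 1 ≤ m := j.isLt
    have : (j : ℕ) + 1 ≤ (Finset.univ.filter (fun i => g i < x)).card := by
      calc (j : ℕ) + 1 = (Finset.univ : Finset (Fin ((j : ℕ) + 1))).card := by simp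
        _ ≤ _ := by
          refine Finset.card_le_card_of_injOn (Fin.castLE hle) ?_ ?_
          · intro a _
            simp only [Finset.mem_coe, Finset.mem_filter, Finset.mem_univ, true_and]
            have : Fin.castLE hle a ≤ j := by
              rw [Fin.le_def]; simp; omega
            exact lt_of_le_of_lt (hg this) hc
          · exact fun a _ b _ hab => (Fin.castLE_injective hle) hab
    omega

lemma cnt_sort_le {m : ℕ} (x : Fin m → ℝ) (j : Fin m) :
    cnt x (Tuple.sort x j) ≤ (j : ℕ) := by
  rw [← cnt_comp x (Tuple.sort x) j]
  have hmono := Tuple.monotone_sort x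
  have := (le_orderStat_iff (x ∘ Tuple.sort x) hmono ((x ∘ Tuple.sort x) j) j).mp le_rfl
  simpa [cnt] using this

lemma le_card_rank_lt {m k : ℕ} (hk : k ≤ m) (x : Fin m → ℝ) :
    k ≤ (Finset.univ.filter (fun i => cnt x i < k)).card := by
  have h0 := aux_card m k hk
  refine le_trans (le_of_eq h0.symm) ?_
  refine Finset.card_le_card_of_injOn (Tuple.sort x) ?_ ?_
  · intro a ha
    simp only [Finset.mem_coe, Finset.mem_filter, Finset.mem_univ, true_and] at ha ⊢
    exact lt_of_le_of_lt (cnt_sort_le x a) ha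
  · exact fun a _ b _ hab => (Tuple.sort x).injective hab

/-- finite-sample marginal coverage of split conformal prediction.
If the `n+1` scores `R(ω)(0), …, R(ω)(n)` are exchangeable, `k = ⌈(1−α)(n+1)⌉`
and `k ≤ n`, then the test score `R(ω)(n)` is at most the `k`-th smallest of
the first `n` (calibration) scores with probability at least `1 − α`. -/

theorem conformal_coverage
    {Ω : Type*} [MeasurableSpace Ω] (μ : Measure Ω) [IsProbabilityMeasure μ]
    (n : ℕ) (hn : 1 ≤ n) (α : ℝ) (hα0 : 0 < α) (hα1 : α < 1)
    (R : Ω → Fin (n + 1) → ℝ) (hR : Measurable R)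
    (hexch : ∀ σ : Equiv.Perm (Fin (n + 1)),
      Measure.map (fun ω => R ω ∘ σ) μ = Measure.map R μ)
    (k : ℕ) (hk : k = ⌈(1 - α) * ((n : ℝ) + 1)⌉₊) (hkn : k ≤ n) :
    ENNReal.ofReal (1 - α)
      ≤ μ {ω | R ω (Fin.last n)
            ≤ orderStat (fun i : Fin n => R ω (Fin.castSucc i)) ⟨k - 1, by omega⟩} := by
  classical
  have hk1 : 1 ≤ k := by
    rw [hk]
    have hpos : 0 < (1 - α) * ((n : ℝ) + 1) := by
      apply mul_pos
      · linarith
      · positivity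
    exact Nat.ceil_pos.mpr hpos
  -- the counting function at the last coordinate
  set C : (Fin (n + 1) → ℝ) → ℕ := fun x => cnt x (Fin.last n) with hCdef
  have hC : Measurable C := by
    have hCeq : C = fun x => ∑ j : Fin (n + 1),
        if x j < x (Fin.last n) then 1 else 0 := by
      funext x; simp only [hCdef]; rw [cnt, Finset.card_filter]
    rw [hCeq]
    exact Finset.measurable_sum _ (fun j _ =>
      Measurable.ite (measurableSet_lt (measurable_pi_apply j)
        (measurable_pi_apply _)) measurable_const measurable_const)
  set B : Set (Fin (n + 1) → ℝ) := C ⁻¹' {t | t < k} with hBdef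
  have hB : MeasurableSet B := hC trivial
  set A : Fin (n + 1) → Set Ω := fun i => {ω | cnt (R ω) i < k} with hAdef
  have hAeq : ∀ i, A i = (fun ω => R ω ∘ Equiv.swap i (Fin.last n)) ⁻¹' B := by
    intro i
    ext ω
    simp only [hAdef, hBdef, hCdef, Set.mem_setOf_eq, Set.mem_preimage]
    rw [cnt_comp]
    simp
  have hmeas : ∀ i : Fin (n + 1),
      Measurable (fun ω => R ω ∘ Equiv.swap i (Fin.last n)) := fun i =>
    measurable_pi_lambda _ (fun j => (measurable_pi_apply _).comp hR)
  have hA : ∀ i, MeasurableSet (A i) := fun i => (hAeq i) ▸ (hmeas i) hB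
  have hAlast : A (Fin.last n) = R ⁻¹' B := by
    rw [hAeq]
    ext ω
    simp [Equiv.swap_self]
  have hμA : ∀ i, μ (A i) = μ (A (Fin.last n)) := by
    intro i
    rw [hAeq i, hAlast, ← Measure.map_apply (hmeas i) hB, hexch,
      Measure.map_apply hR hB]
  have hkN : k ≤ n + 1 := by omega
  have hsum : (k : ENNReal) ≤ ∑ i : Fin (n + 1), μ (A i) := by
    have hpt : ∀ ω, (k : ENNReal)
        ≤ ∑ i : Fin (n + 1), (A i).indicator (1 : Ω → ENNReal) ω := by
      intro ω
      have h := le_card_rank_lt hkN (R ω)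
      calc (k : ENNReal)
          ≤ ((Finset.univ.filter
              (fun i : Fin (n + 1) => cnt (R ω) i < k)).card : ENNReal) := by
            exact_mod_cast h
        _ = ∑ i : Fin (n + 1), (A i).indicator (1 : Ω → ENNReal) ω := by
            rw [Finset.card_filter]
            push_cast
            refine Finset.sum_congr rfl (fun i _ => ?_)
            by_cases hi : cnt (R ω) i < k <;>
              simp [hAdef, Set.indicator_apply, hi]
    calc (k : ENNReal) = ∫⁻ _, (k : ENNReal) ∂μ := by simp
      _ ≤ ∫⁻ ω, ∑ i : Fin (n + 1), (A i).indicator 1 ω ∂μ := lintegral_mono hpt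
      _ = ∑ i : Fin (n + 1), ∫⁻ ω, (A i).indicator 1 ω ∂μ :=
          lintegral_finset_sum _ (fun i _ => measurable_one.indicator (hA i))
      _ = ∑ i : Fin (n + 1), μ (A i) :=
          Finset.sum_congr rfl (fun i _ => lintegral_indicator_one (hA i))
  have hsum' : (k : ENNReal) ≤ ((n + 1 : ℕ) : ENNReal) * μ (A (Fin.last n)) := by
    calc (k : ENNReal) ≤ ∑ i : Fin (n + 1), μ (A i) := hsum
      _ = ∑ _i : Fin (n + 1), μ (A (Fin.last n)) :=
          Finset.sum_congr rfl (fun i _ => hμA i)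
      _ = ((n + 1 : ℕ) : ENNReal) * μ (A (Fin.last n)) := by
          rw [Finset.sum_const, Finset.card_univ, Fintype.card_fin, nsmul_eq_mul]
  have hev : {ω | R ω (Fin.last n)
      ≤ orderStat (fun i : Fin n => R ω (Fin.castSucc i)) ⟨k - 1, by omega⟩}
      = A (Fin.last n) := by
    ext ω
    simp only [Set.mem_setOf_eq, hAdef]
    set f : Fin n → ℝ := fun i => R ω (Fin.castSucc i) with hf
    have hmono := Tuple.monotone_sort f
    have h1 : orderStat f ⟨k - 1, by omega⟩
        = (f ∘ Tuple.sort f) ⟨k - 1, by omega⟩ := rfl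
    rw [h1, le_orderStat_iff _ hmono]
    have h2 : (Finset.univ.filter
        (fun i : Fin n => (f ∘ Tuple.sort f) i < R ω (Fin.last n))).card
        = (Finset.univ.filter (fun i : Fin n => f i < R ω (Fin.last n))).card := by
      simpa using card_filter_comp f (Tuple.sort f) (R ω (Fin.last n))
    rw [h2]
    have h3 : cnt (R ω) (Fin.last n)
        = (Finset.univ.filter (fun i : Fin n => f i < R ω (Fin.last n))).card := by
      rw [cnt, Finset.card_filter, Finset.card_filter, Fin.sum_univ_castSucc]
      simp [hf]
    rw [h3]
    constructor <;> intro h <;> simp at h ⊢ <;> omega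
  rw [hev]
  have hreal : (1 - α) * ((n : ℝ) + 1) ≤ (k : ℝ) := by
    rw [hk]; exact Nat.le_ceil _
  have h4 : ENNReal.ofReal (1 - α) * ((n + 1 : ℕ) : ENNReal) ≤ (k : ENNReal) := by
    rw [← ENNReal.ofReal_natCast (n + 1), ← ENNReal.ofReal_mul (by linarith)]
    calc ENNReal.ofReal ((1 - α) * ((n + 1 : ℕ) : ℝ))
        ≤ ENNReal.ofReal (k : ℝ) :=
          ENNReal.ofReal_le_ofReal (by push_cast; push_cast at hreal; linarith)
      _ = (k : ENNReal) := ENNReal.ofReal_natCast k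
  have hc0 : ((n + 1 : ℕ) : ENNReal) ≠ 0 := by simp
  have hcinf : ((n + 1 : ℕ) : ENNReal) ≠ ⊤ := by simp
  have hfin := le_trans h4 hsum'
  rw [mul_comm ((n + 1 : ℕ) : ENNReal)] at hfin
  exact (ENNReal.mul_le_mul_iff_left hc0 hcinf).mp hfin
end
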